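/- Let D ⊂ ℝ be a bounded open interval and 0 < α ≤ β. Let (a_k) and (b_k) be sequences of measurable functions on D with values in [α, β], and assume that for almost every x ∈ D, lim_{ρ→0⁺} limsup_{k→+∞} (1/ρ) ∫_{B_ρ(x) ∩ D} |a_k(y) − b_k(y)| dy = 0. Assume moreover that there exists θ ∈ L^∞(D) such that 1/a_k − 1/b_k converges to θ weakly* in L^∞(D), i.e. ∫_D (1/a_k(y) − 1/b_k(y)) φ(y) dy → ∫_D θ(y) φ(y) dy for every φ ∈ L¹(D). Then θ(x) = 0 for almost every x ∈ D. -/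

import Mathlib

open MeasureTheory Filter Metric

private lemma limsup_const_mul_aux {c : ℝ} (hc : 0 ≤ c) (w : ℕ → ℝ)
    (hbdd : Filter.IsBoundedUnder (· ≤ ·) Filter.atTop w)
    (hcob : Filter.IsCoboundedUnder (· ≤ ·) Filter.atTop w) :
    Filter.limsup (fun k => c * w k) Filter.atTop = c * Filter.limsup w Filter.atTop := by
  have hmono : Monotone fun t : ℝ => c * t := fun s t hst => mul_le_mul_of_nonneg_left hst hc
  have h := hmono.map_limsup_of_continuousAt w
    ((continuous_const.mul continuous_id).continuousAt) hbdd hcob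
  exact h.symm

/-- In dimension one, the local closeness condition on the coefficients `a_k`, `b_k`
forces any weak* limit `θ` of `1/a_k − 1/b_k` in `L^∞(D)` to vanish almost everywhere. -/
theorem one_dim_weak_star_limit_vanishes
    (c₀ d₀ : ℝ) (hcd : c₀ < d₀) (α β : ℝ) (hα : 0 < α) (hαβ : α ≤ β)
    (a b : ℕ → ℝ → ℝ)
    (hameas : ∀ k, Measurable (a k)) (hbmeas : ∀ k, Measurable (b k))
    (hrange : ∀ k x, x ∈ Set.Ioo c₀ d₀ → a k x ∈ Set.Icc α β ∧ b k x ∈ Set.Icc α β)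
    (hclose : ∀ᵐ x ∂(volume.restrict (Set.Ioo c₀ d₀)),
      Tendsto (fun ρ : ℝ => Filter.limsup (fun k : ℕ =>
          (1 / ρ) * ∫ y in ball x ρ ∩ Set.Ioo c₀ d₀, |a k y - b k y|) atTop)
        (nhdsWithin 0 (Set.Ioi 0)) (nhds 0))
    (θ : ℝ → ℝ) (hθmeas : Measurable θ)
    (hθbd : ∃ C : ℝ, ∀ᵐ x ∂(volume.restrict (Set.Ioo c₀ d₀)), |θ x| ≤ C)
    (hweak : ∀ φ : ℝ → ℝ, IntegrableOn φ (Set.Ioo c₀ d₀) →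
      Tendsto (fun k : ℕ => ∫ y in Set.Ioo c₀ d₀, (1 / a k y - 1 / b k y) * φ y) atTop
        (nhds (∫ y in Set.Ioo c₀ d₀, θ y * φ y))) :
    ∀ᵐ x ∂(volume.restrict (Set.Ioo c₀ d₀)), θ x = 0 := by
  set D := Set.Ioo c₀ d₀ with hDdef
  have hDmeas : MeasurableSet D := measurableSet_Ioo
  have hDvol : volume D < ⊤ := by
    rw [hDdef, Real.volume_Ioo]; exact ENNReal.ofReal_lt_top
  have hα2 : (0:ℝ) < α ^ 2 := by positivity
  obtain ⟨C, hC⟩ := hθbd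
  have hθint : IntegrableOn θ D := by
    exact Measure.integrableOn_of_bounded hDvol.ne hθmeas.aestronglyMeasurable
      (by simpa [Real.norm_eq_abs] using hC)
  have hf : Integrable (D.indicator θ) := hθint.integrable_indicator hDmeas
  -- Lebesgue differentiation
  have hleb : ∀ᵐ x : ℝ, Tendsto (fun r : ℝ => ⨍ y in closedBall x r, D.indicator θ y)
      (nhdsWithin 0 (Set.Ioi 0)) (nhds (D.indicator θ x)) := by
    filter_upwards [IsUnifLocDoublingMeasure.ae_tendsto_average (volume : Measure ℝ)
      hf.locallyIntegrable 1] with x hx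
    refine hx (fun _ => x) (fun r => r) tendsto_id ?_
    filter_upwards [self_mem_nhdsWithin] with r hr
    simp only [mem_closedBall, dist_self, one_mul]
    exact (Set.mem_Ioi.mp hr).le
  -- Key pointwise estimate for every x and every radius r > 0
  have key : ∀ x : ℝ, ∀ r : ℝ, 0 < r →
      |(1 / r) * ∫ y in ball x r ∩ D, θ y| ≤
        (1 / α ^ 2) * Filter.limsup
          (fun k : ℕ => (1 / r) * ∫ y in ball x r ∩ D, |a k y - b k y|) atTop := by
    intro x r hr
    set S := ball x r ∩ D with hSdef
    have hSmeas : MeasurableSet S := measurableSet_ball.inter hDmeas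
    have hSvol : volume S < ⊤ := lt_of_le_of_lt (measure_mono Set.inter_subset_right) hDvol
    have hSsub : S ⊆ D := Set.inter_subset_right
    -- the test function
    have hφ : IntegrableOn ((ball x r).indicator (fun _ => (1:ℝ))) D :=
      (integrableOn_const hDvol.ne).indicator measurableSet_ball
    have hrw : ∀ g : ℝ → ℝ,
        (∫ y in D, g y * (ball x r).indicator (fun _ => (1:ℝ)) y) = ∫ y in S, g y := by
      intro g
      have hpt : (fun y => g y * (ball x r).indicator (fun _ => (1:ℝ)) y)
          = (ball x r).indicator g := by
        funext y; by_cases h : y ∈ ball x r <;> simp [h]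
      rw [show (∫ y in D, g y * (ball x r).indicator (fun _ => (1:ℝ)) y)
          = ∫ y in D, (ball x r).indicator g y from by rw [hpt],
        setIntegral_indicator measurableSet_ball, Set.inter_comm]
    have hu : Tendsto (fun k : ℕ => ∫ y in S, (1 / a k y - 1 / b k y)) atTop
        (nhds (∫ y in S, θ y)) := by
      have h1 := hweak _ hφ
      rw [hrw θ] at h1
      exact h1.congr fun k => hrw _
    -- integrability on S
    have hint1 : ∀ k, IntegrableOn (fun y => 1 / a k y - 1 / b k y) S := by
      intro k
      refine Measure.integrableOn_of_bounded (M := 1/α + 1/α) hSvol.ne ?_ ?_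
      · have : Measurable fun y => 1 / a k y - 1 / b k y := by
          exact ((hameas k).const_div 1).sub ((hbmeas k).const_div 1)
        exact this.aestronglyMeasurable
      · filter_upwards [ae_restrict_mem hSmeas] with y hy
        obtain ⟨ha, hb⟩ := hrange k y (hSsub hy)
        have ha0 : (0:ℝ) < a k y := lt_of_lt_of_le hα ha.1
        have hb0 : (0:ℝ) < b k y := lt_of_lt_of_le hα hb.1
        have h1 : 1 / a k y ≤ 1 / α := one_div_le_one_div_of_le hα ha.1
        have h2 : 1 / b k y ≤ 1 / α := one_div_le_one_div_of_le hα hb.1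
        have h3 : (0:ℝ) < 1 / a k y := by positivity
        have h4 : (0:ℝ) < 1 / b k y := by positivity
        rw [Real.norm_eq_abs, abs_le]
        constructor <;> nlinarith
    have hint2 : ∀ k, IntegrableOn (fun y => |a k y - b k y|) S := by
      intro k
      refine Measure.integrableOn_of_bounded (M := β + β) hSvol.ne
        ((hameas k).sub (hbmeas k)).abs.aestronglyMeasurable ?_
      filter_upwards [ae_restrict_mem hSmeas] with y hy
      obtain ⟨ha, hb⟩ := hrange k y (hSsub hy)
      rw [Real.norm_eq_abs, abs_abs, abs_le]
      constructor <;> [nlinarith [ha.1, hb.2]; nlinarith [ha.2, hb.1]]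
    -- per-k bound
    have hbound : ∀ k : ℕ, |∫ y in S, (1 / a k y - 1 / b k y)| ≤
        (1 / α ^ 2) * ∫ y in S, |a k y - b k y| := by
      intro k
      calc |∫ y in S, (1 / a k y - 1 / b k y)|
          ≤ ∫ y in S, |1 / a k y - 1 / b k y| := by
            simpa [Real.norm_eq_abs] using
              norm_integral_le_integral_norm (μ := volume.restrict S)
                (fun y => 1 / a k y - 1 / b k y)
        _ ≤ ∫ y in S, (1 / α ^ 2) * |a k y - b k y| := by
            refine setIntegral_mono_on (hint1 k).abs ((hint2 k).const_mul _) hSmeas ?_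
            intro y hy
            obtain ⟨ha, hb⟩ := hrange k y (hSsub hy)
            have ha0 : (0:ℝ) < a k y := lt_of_lt_of_le hα ha.1
            have hb0 : (0:ℝ) < b k y := lt_of_lt_of_le hα hb.1
            have hdiff : 1 / a k y - 1 / b k y = (b k y - a k y) / (a k y * b k y) := by
              field_simp
            rw [hdiff, abs_div, abs_of_pos (mul_pos ha0 hb0), abs_sub_comm,
              one_div, inv_mul_eq_div]
            have hab : α ^ 2 ≤ a k y * b k y := by nlinarith [ha.1, hb.1]
            exact div_le_div_of_nonneg_left (abs_nonneg _) hα2 hab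
        _ = (1 / α ^ 2) * ∫ y in S, |a k y - b k y| := integral_const_mul _ _
    set w : ℕ → ℝ := fun k => ∫ y in S, |a k y - b k y| with hwdef
    have hw0 : ∀ k, 0 ≤ w k := fun k =>
      setIntegral_nonneg hSmeas fun y _ => abs_nonneg _
    have hwub : ∀ k, w k ≤ (β + β) * (volume S).toReal := by
      intro k
      have hb : ‖∫ y in S, |a k y - b k y|‖ ≤ (β + β) * (volume S).toReal := by
        refine norm_setIntegral_le_of_norm_le_const hSvol ?_
        intro y hy
        obtain ⟨ha, hb⟩ := hrange k y (hSsub hy)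
        rw [Real.norm_eq_abs, abs_abs, abs_le]
        constructor <;> [nlinarith [ha.1, hb.2]; nlinarith [ha.2, hb.1]]
      exact le_trans (le_abs_self _) (by simpa [Real.norm_eq_abs] using hb)
    have hbddw : Filter.IsBoundedUnder (· ≤ ·) atTop w :=
      isBoundedUnder_of ⟨(β + β) * (volume S).toReal, hwub⟩
    have hcobw : Filter.IsCoboundedUnder (· ≤ ·) atTop w :=
      (isBoundedUnder_of ⟨0, hw0⟩ :
        Filter.IsBoundedUnder (· ≥ ·) atTop w).isCoboundedUnder_le
    have hbddw2 : Filter.IsBoundedUnder (· ≤ ·) atTop fun k => (1 / α ^ 2) * w k :=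
      isBoundedUnder_of ⟨(1 / α ^ 2) * ((β + β) * (volume S).toReal), fun k =>
        mul_le_mul_of_nonneg_left (hwub k) (by positivity)⟩
    have hT : Tendsto (fun k : ℕ => |∫ y in S, (1 / a k y - 1 / b k y)|) atTop
        (nhds |∫ y in S, θ y|) := hu.abs
    have h1 : |∫ y in S, θ y| ≤ Filter.limsup (fun k => (1 / α ^ 2) * w k) atTop := by
      rw [← hT.limsup_eq]
      exact Filter.limsup_le_limsup (Eventually.of_forall hbound)
        hT.isCoboundedUnder_le hbddw2
    have e1 : Filter.limsup (fun k => (1 / α ^ 2) * w k) atTop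
        = (1 / α ^ 2) * Filter.limsup w atTop :=
      limsup_const_mul_aux (by positivity) w hbddw hcobw
    have e2 : Filter.limsup (fun k => (1 / r) * w k) atTop
        = (1 / r) * Filter.limsup w atTop :=
      limsup_const_mul_aux (by positivity) w hbddw hcobw
    rw [abs_mul, abs_of_pos (by positivity : (0:ℝ) < 1 / r)]
    calc (1 / r) * |∫ y in S, θ y|
        ≤ (1 / r) * ((1 / α ^ 2) * Filter.limsup w atTop) := by
          rw [e1] at h1
          exact mul_le_mul_of_nonneg_left h1 (by positivity)
      _ = (1 / α ^ 2) * ((1 / r) * Filter.limsup w atTop) := by ring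
      _ = (1 / α ^ 2) * Filter.limsup (fun k => (1 / r) * w k) atTop := by rw [e2]
  -- Assemble
  filter_upwards [hclose, ae_restrict_of_ae hleb, ae_restrict_mem hDmeas] with x hx hlx hxD
  rw [Set.indicator_of_mem hxD θ] at hlx
  have havg : ∀ r : ℝ, 0 < r →
      (⨍ y in closedBall x r, D.indicator θ y) = (2 * r)⁻¹ * ∫ y in ball x r ∩ D, θ y := by
    intro r hr
    rw [setAverage_eq, measureReal_def, Real.volume_closedBall, ENNReal.toReal_ofReal (by positivity),
      smul_eq_mul]
    congr 1
    rw [Real.closedBall_eq_Icc, integral_Icc_eq_integral_Ioo, ← Real.ball_eq_Ioo,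
      setIntegral_indicator hDmeas]
  have h2 : Tendsto (fun r : ℝ => (1 / r) * ∫ y in ball x r ∩ D, θ y)
      (nhdsWithin 0 (Set.Ioi 0)) (nhds (2 * θ x)) := by
    refine (hlx.const_mul (2:ℝ)).congr' ?_
    filter_upwards [self_mem_nhdsWithin] with r hr
    have hr0 : (0:ℝ) < r := hr
    rw [havg r hr0, mul_inv, one_div]
    ring
  have hg : Tendsto (fun ρ : ℝ => (1 / α ^ 2) * Filter.limsup (fun k : ℕ =>
      (1 / ρ) * ∫ y in ball x ρ ∩ D, |a k y - b k y|) atTop)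
      (nhdsWithin 0 (Set.Ioi 0)) (nhds 0) := by
    have := hx.const_mul (1 / α ^ 2)
    simpa using this
  have hfin : |2 * θ x| ≤ 0 := by
    refine le_of_tendsto_of_tendsto h2.abs hg ?_
    filter_upwards [self_mem_nhdsWithin] with r hr
    exact key x r hr
  have := abs_nonpos_iff.mp hfin
  linarith
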